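/- In an octagon with sides labeled cyclically ∂T, α, ∂T, β, ∂T, α, ∂T, β, suppose a disjoint collection of properly embedded arcs meets the two α-sides in p endpoints each and the two β-sides in q endpoints each, with p < q, and no arc has both endpoints on the same side or on a ∂T-side. Model this combinatorially: arcs are chords of a convex octagon with endpoints only on the α- and β-sides, pairwise non-crossing, with each α-side carrying p endpoints and each β-side carrying q endpoints. Then exactly 2p arcs join an α-side to a β-side, and exactly q - p arcs join the two β-sides to each other, and no arc joins the two α-sides. -/
import Mathlib


/-- The point `t` lies in the interior of side `i` of the octagon, where side `i`
is the interval `(i - 1, i)` on the boundary, parameterized by `[0, 8)`. -/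
def InSide (i : ℕ) (t : ℝ) : Prop := (i : ℝ) - 1 < t ∧ t < i

noncomputable instance (i : ℕ) (t : ℝ) : Decidable (InSide i t) := by
  unfold InSide; infer_instance

/-- `t` lies on one of the two α-sides (sides `2` and `6`). -/
def OnAlpha (t : ℝ) : Prop := InSide 2 t ∨ InSide 6 t

/-- `t` lies on one of the two β-sides (sides `4` and `8`). -/
def OnBeta (t : ℝ) : Prop := InSide 4 t ∨ InSide 8 t

noncomputable instance (t : ℝ) : Decidable (OnAlpha t) := by unfold OnAlpha; infer_instance
noncomputable instance (t : ℝ) : Decidable (OnBeta t) := by unfold OnBeta; infer_instance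

/-- Two chords of the octagon (each recorded as an ordered pair of boundary
parameters) cross. -/
def Crosses (c c' : ℝ × ℝ) : Prop :=
  (c.1 < c'.1 ∧ c'.1 < c.2 ∧ c.2 < c'.2) ∨ (c'.1 < c.1 ∧ c.1 < c'.2 ∧ c'.2 < c.2)

lemma inSide_lt {i j : ℕ} {s t : ℝ} (hij : i < j) (hs : InSide i s) (ht : InSide j t) :
    s < t := by
  have h : (i : ℝ) + 1 ≤ j := by exact_mod_cast hij
  unfold InSide at hs ht
  linarith [hs.2, ht.1]

lemma not_inSide {i j : ℕ} {t : ℝ} (h : InSide i t) (hne : j ≠ i) : ¬ InSide j t := by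
  intro h'
  rcases hne.lt_or_gt with hl | hl
  · exact absurd (inSide_lt hl h' h) (lt_irrefl t)
  · exact absurd (inSide_lt hl h h') (lt_irrefl t)

/-- Octagon lemma: in a convex octagon with sides cyclically labeled
`∂T, α, ∂T, β, ∂T, α, ∂T, β`, a pairwise disjoint chord system with all endpoints
interior to the α- and β-sides, no chord having both endpoints on the same side,
with each α-side carrying `p` endpoints and each β-side carrying `q` endpoints,
`p < q`, consists of exactly `2p` chords joining an α-side to a β-side and `q - p`
chords joining the two β-sides, with no chord joining the two α-sides. -/
theorem octagon_lemma (p q : ℕ) (hpq : p < q) (chords : Finset (ℝ × ℝ))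
    (hord : ∀ c ∈ chords, c.1 < c.2)
    (hsides : ∀ c ∈ chords,
      (InSide 2 c.1 ∨ InSide 4 c.1 ∨ InSide 6 c.1 ∨ InSide 8 c.1) ∧
      (InSide 2 c.2 ∨ InSide 4 c.2 ∨ InSide 6 c.2 ∨ InSide 8 c.2))
    (hnotsame : ∀ c ∈ chords, ∀ i ∈ ([2, 4, 6, 8] : List ℕ),
      ¬(InSide i c.1 ∧ InSide i c.2))
    (hdisj : ∀ c ∈ chords, ∀ c' ∈ chords, c ≠ c' →
      c.1 ≠ c'.1 ∧ c.1 ≠ c'.2 ∧ c.2 ≠ c'.1 ∧ c.2 ≠ c'.2)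
    (hnocross : ∀ c ∈ chords, ∀ c' ∈ chords, ¬Crosses c c')
    (hcount2 : (chords.filter (fun c => InSide 2 c.1)).card +
               (chords.filter (fun c => InSide 2 c.2)).card = p)
    (hcount6 : (chords.filter (fun c => InSide 6 c.1)).card +
               (chords.filter (fun c => InSide 6 c.2)).card = p)
    (hcount4 : (chords.filter (fun c => InSide 4 c.1)).card +
               (chords.filter (fun c => InSide 4 c.2)).card = q)
    (hcount8 : (chords.filter (fun c => InSide 8 c.1)).card +
               (chords.filter (fun c => InSide 8 c.2)).card = q) :
    (chords.filter (fun c => (OnAlpha c.1 ∧ OnBeta c.2) ∨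
      (OnBeta c.1 ∧ OnAlpha c.2))).card = 2 * p ∧
    (chords.filter (fun c => OnBeta c.1 ∧ OnBeta c.2)).card = q - p ∧
    (chords.filter (fun c => OnAlpha c.1 ∧ OnAlpha c.2)).card = 0 := by
  have classify : ∀ c ∈ chords,
      (InSide 2 c.1 ∧ InSide 4 c.2) ∨ (InSide 2 c.1 ∧ InSide 6 c.2) ∨
      (InSide 2 c.1 ∧ InSide 8 c.2) ∨ (InSide 4 c.1 ∧ InSide 6 c.2) ∨
      (InSide 4 c.1 ∧ InSide 8 c.2) ∨ (InSide 6 c.1 ∧ InSide 8 c.2) := by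
    intro c hc
    obtain ⟨h1, h2⟩ := hsides c hc
    have ho := hord c hc
    have hn2 := hnotsame c hc 2 (by simp)
    have hn4 := hnotsame c hc 4 (by simp)
    have hn6 := hnotsame c hc 6 (by simp)
    have hn8 := hnotsame c hc 8 (by simp)
    have back : ∀ {i j : ℕ}, j < i → InSide i c.1 → InSide j c.2 → False := by
      intro i j hij ha hb
      exact absurd ho (not_lt.2 (inSide_lt hij hb ha).le)
    rcases h1 with ha | ha | ha | ha <;> rcases h2 with hb | hb | hb | hb
    · exact absurd ⟨ha, hb⟩ hn2
    · exact Or.inl ⟨ha, hb⟩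
    · exact Or.inr (Or.inl ⟨ha, hb⟩)
    · exact Or.inr (Or.inr (Or.inl ⟨ha, hb⟩))
    · exact absurd ho (not_lt.2 (inSide_lt (by norm_num) hb ha).le)
    · exact absurd ⟨ha, hb⟩ hn4
    · exact Or.inr (Or.inr (Or.inr (Or.inl ⟨ha, hb⟩)))
    · exact Or.inr (Or.inr (Or.inr (Or.inr (Or.inl ⟨ha, hb⟩))))
    · exact absurd ho (not_lt.2 (inSide_lt (by norm_num) hb ha).le)
    · exact absurd ho (not_lt.2 (inSide_lt (by norm_num) hb ha).le)
    · exact absurd ⟨ha, hb⟩ hn6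
    · exact Or.inr (Or.inr (Or.inr (Or.inr (Or.inr ⟨ha, hb⟩))))
    · exact absurd ho (not_lt.2 (inSide_lt (by norm_num) hb ha).le)
    · exact absurd ho (not_lt.2 (inSide_lt (by norm_num) hb ha).le)
    · exact absurd ho (not_lt.2 (inSide_lt (by norm_num) hb ha).le)
    · exact absurd ⟨ha, hb⟩ hn8
  have key1 : ∀ c ∈ chords,
      ((if InSide 2 c.1 then (1:ℕ) else 0) + (if InSide 2 c.2 then 1 else 0)) +
      ((if InSide 6 c.1 then 1 else 0) + (if InSide 6 c.2 then 1 else 0)) =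
      (if ((OnAlpha c.1 ∧ OnBeta c.2) ∨ (OnBeta c.1 ∧ OnAlpha c.2)) then 1 else 0) +
      2 * (if (OnAlpha c.1 ∧ OnAlpha c.2) then 1 else 0) := by
    intro c hc
    rcases classify c hc with ⟨h1,h2⟩|⟨h1,h2⟩|⟨h1,h2⟩|⟨h1,h2⟩|⟨h1,h2⟩|⟨h1,h2⟩
    · simp [OnAlpha, OnBeta, h1, h2, not_inSide h1 (by norm_num : (4:ℕ) ≠ 2),
        not_inSide h1 (by norm_num : (6:ℕ) ≠ 2), not_inSide h1 (by norm_num : (8:ℕ) ≠ 2),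
        not_inSide h2 (by norm_num : (2:ℕ) ≠ 4), not_inSide h2 (by norm_num : (6:ℕ) ≠ 4),
        not_inSide h2 (by norm_num : (8:ℕ) ≠ 4)]
    · simp [OnAlpha, OnBeta, h1, h2, not_inSide h1 (by norm_num : (4:ℕ) ≠ 2),
        not_inSide h1 (by norm_num : (6:ℕ) ≠ 2), not_inSide h1 (by norm_num : (8:ℕ) ≠ 2),
        not_inSide h2 (by norm_num : (2:ℕ) ≠ 6), not_inSide h2 (by norm_num : (4:ℕ) ≠ 6),
        not_inSide h2 (by norm_num : (8:ℕ) ≠ 6)]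
    · simp [OnAlpha, OnBeta, h1, h2, not_inSide h1 (by norm_num : (4:ℕ) ≠ 2),
        not_inSide h1 (by norm_num : (6:ℕ) ≠ 2), not_inSide h1 (by norm_num : (8:ℕ) ≠ 2),
        not_inSide h2 (by norm_num : (2:ℕ) ≠ 8), not_inSide h2 (by norm_num : (4:ℕ) ≠ 8),
        not_inSide h2 (by norm_num : (6:ℕ) ≠ 8)]
    · simp [OnAlpha, OnBeta, h1, h2, not_inSide h1 (by norm_num : (2:ℕ) ≠ 4),
        not_inSide h1 (by norm_num : (6:ℕ) ≠ 4), not_inSide h1 (by norm_num : (8:ℕ) ≠ 4),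
        not_inSide h2 (by norm_num : (2:ℕ) ≠ 6), not_inSide h2 (by norm_num : (4:ℕ) ≠ 6),
        not_inSide h2 (by norm_num : (8:ℕ) ≠ 6)]
    · simp [OnAlpha, OnBeta, h1, h2, not_inSide h1 (by norm_num : (2:ℕ) ≠ 4),
        not_inSide h1 (by norm_num : (6:ℕ) ≠ 4), not_inSide h1 (by norm_num : (8:ℕ) ≠ 4),
        not_inSide h2 (by norm_num : (2:ℕ) ≠ 8), not_inSide h2 (by norm_num : (4:ℕ) ≠ 8),
        not_inSide h2 (by norm_num : (6:ℕ) ≠ 8)]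
    · simp [OnAlpha, OnBeta, h1, h2, not_inSide h1 (by norm_num : (2:ℕ) ≠ 6),
        not_inSide h1 (by norm_num : (4:ℕ) ≠ 6), not_inSide h1 (by norm_num : (8:ℕ) ≠ 6),
        not_inSide h2 (by norm_num : (2:ℕ) ≠ 8), not_inSide h2 (by norm_num : (4:ℕ) ≠ 8),
        not_inSide h2 (by norm_num : (6:ℕ) ≠ 8)]
  have key2 : ∀ c ∈ chords,
      ((if InSide 4 c.1 then (1:ℕ) else 0) + (if InSide 4 c.2 then 1 else 0)) +
      ((if InSide 8 c.1 then 1 else 0) + (if InSide 8 c.2 then 1 else 0)) =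
      (if ((OnAlpha c.1 ∧ OnBeta c.2) ∨ (OnBeta c.1 ∧ OnAlpha c.2)) then 1 else 0) +
      2 * (if (OnBeta c.1 ∧ OnBeta c.2) then 1 else 0) := by
    intro c hc
    rcases classify c hc with ⟨h1,h2⟩|⟨h1,h2⟩|⟨h1,h2⟩|⟨h1,h2⟩|⟨h1,h2⟩|⟨h1,h2⟩
    · simp [OnAlpha, OnBeta, h1, h2, not_inSide h1 (by norm_num : (4:ℕ) ≠ 2),
        not_inSide h1 (by norm_num : (6:ℕ) ≠ 2), not_inSide h1 (by norm_num : (8:ℕ) ≠ 2),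
        not_inSide h2 (by norm_num : (2:ℕ) ≠ 4), not_inSide h2 (by norm_num : (6:ℕ) ≠ 4),
        not_inSide h2 (by norm_num : (8:ℕ) ≠ 4)]
    · simp [OnAlpha, OnBeta, h1, h2, not_inSide h1 (by norm_num : (4:ℕ) ≠ 2),
        not_inSide h1 (by norm_num : (6:ℕ) ≠ 2), not_inSide h1 (by norm_num : (8:ℕ) ≠ 2),
        not_inSide h2 (by norm_num : (2:ℕ) ≠ 6), not_inSide h2 (by norm_num : (4:ℕ) ≠ 6),
        not_inSide h2 (by norm_num : (8:ℕ) ≠ 6)]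
    · simp [OnAlpha, OnBeta, h1, h2, not_inSide h1 (by norm_num : (4:ℕ) ≠ 2),
        not_inSide h1 (by norm_num : (6:ℕ) ≠ 2), not_inSide h1 (by norm_num : (8:ℕ) ≠ 2),
        not_inSide h2 (by norm_num : (2:ℕ) ≠ 8), not_inSide h2 (by norm_num : (4:ℕ) ≠ 8),
        not_inSide h2 (by norm_num : (6:ℕ) ≠ 8)]
    · simp [OnAlpha, OnBeta, h1, h2, not_inSide h1 (by norm_num : (2:ℕ) ≠ 4),
        not_inSide h1 (by norm_num : (6:ℕ) ≠ 4), not_inSide h1 (by norm_num : (8:ℕ) ≠ 4),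
        not_inSide h2 (by norm_num : (2:ℕ) ≠ 6), not_inSide h2 (by norm_num : (4:ℕ) ≠ 6),
        not_inSide h2 (by norm_num : (8:ℕ) ≠ 6)]
    · simp [OnAlpha, OnBeta, h1, h2, not_inSide h1 (by norm_num : (2:ℕ) ≠ 4),
        not_inSide h1 (by norm_num : (6:ℕ) ≠ 4), not_inSide h1 (by norm_num : (8:ℕ) ≠ 4),
        not_inSide h2 (by norm_num : (2:ℕ) ≠ 8), not_inSide h2 (by norm_num : (4:ℕ) ≠ 8),
        not_inSide h2 (by norm_num : (6:ℕ) ≠ 8)]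
    · simp [OnAlpha, OnBeta, h1, h2, not_inSide h1 (by norm_num : (2:ℕ) ≠ 6),
        not_inSide h1 (by norm_num : (4:ℕ) ≠ 6), not_inSide h1 (by norm_num : (8:ℕ) ≠ 6),
        not_inSide h2 (by norm_num : (2:ℕ) ≠ 8), not_inSide h2 (by norm_num : (4:ℕ) ≠ 8),
        not_inSide h2 (by norm_num : (6:ℕ) ≠ 8)]
  have e1 := Finset.sum_congr rfl key1
  have e2 := Finset.sum_congr rfl key2
  simp only [Finset.sum_add_distrib, ← Finset.mul_sum, ← Finset.card_filter] at e1 e2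
  have hdich : (chords.filter (fun c => OnAlpha c.1 ∧ OnAlpha c.2)).card = 0 ∨
      (chords.filter (fun c => OnBeta c.1 ∧ OnBeta c.2)).card = 0 := by
    by_contra h
    push_neg at h
    obtain ⟨c, hcm⟩ := Finset.card_pos.1 (Nat.pos_of_ne_zero h.1)
    obtain ⟨c', hcm'⟩ := Finset.card_pos.1 (Nat.pos_of_ne_zero h.2)
    rw [Finset.mem_filter] at hcm hcm'
    obtain ⟨hc, hca⟩ := hcm
    obtain ⟨hc', hcb⟩ := hcm'
    have h26 : InSide 2 c.1 ∧ InSide 6 c.2 := by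
      rcases hca with ⟨h1|h1, h2|h2⟩
      · exact absurd ⟨h1, h2⟩ (hnotsame c hc 2 (by simp))
      · exact ⟨h1, h2⟩
      · exact absurd (hord c hc) (not_lt.2 (inSide_lt (by norm_num) h2 h1).le)
      · exact absurd ⟨h1, h2⟩ (hnotsame c hc 6 (by simp))
    have h48 : InSide 4 c'.1 ∧ InSide 8 c'.2 := by
      rcases hcb with ⟨h1|h1, h2|h2⟩
      · exact absurd ⟨h1, h2⟩ (hnotsame c' hc' 4 (by simp))
      · exact ⟨h1, h2⟩
      · exact absurd (hord c' hc') (not_lt.2 (inSide_lt (by norm_num) h2 h1).le)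
      · exact absurd ⟨h1, h2⟩ (hnotsame c' hc' 8 (by simp))
    apply hnocross c hc c' hc'
    obtain ⟨⟨ha1, ha2⟩, hb1, hb2⟩ := h26
    obtain ⟨⟨hc1, hc2⟩, hd1, hd2⟩ := h48
    push_cast at ha1 ha2 hb1 hb2 hc1 hc2 hd1 hd2
    exact Or.inl ⟨by linarith, by linarith, by linarith⟩
  refine ⟨?_, ?_, ?_⟩ <;> omega
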